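/- Let Λ = (L, 𝔐, ⊨) be an eviction-compatible satisfaction system (FRsubs(Mod(B) \ M, Λ) ≠ ∅ for all finite B and all M). If a model change operation ⊖ satisfies success (M ∩ Mod(⊖(B,M)) = ∅), inclusion (Mod(⊖(B,M)) ⊆ Mod(B)), and finite retainment (if Mod(⊖(B,M)) ⊊ M' ⊆ Mod(B) \ M then M' ∉ FRsets(Λ)), then Mod(⊖(B,M)) ∈ FRsubs(Mod(B) \ M, Λ) for all finite B ⊆ L and M ⊆ 𝔐. -/
import Mathlib

variable {α β : Type*}

def ModelsOf (sat : β → Set α → Prop) (B : Set α) : Set β := {m | sat m B}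

def FRsets (sat : β → Set α → Prop) : Set (Set β) :=
  {X | ∃ B : Set α, B.Finite ∧ ModelsOf sat B = X}

def FRsubs (sat : β → Set α → Prop) (M : Set β) : Set (Set β) :=
  {X | X ∈ FRsets sat ∧ X ⊆ M ∧ ¬ ∃ Y ∈ FRsets sat, X ⊂ Y ∧ Y ⊆ M}

def FRsups (sat : β → Set α → Prop) (M : Set β) : Set (Set β) :=
  {X | X ∈ FRsets sat ∧ M ⊆ X ∧ ¬ ∃ Y ∈ FRsets sat, M ⊆ Y ∧ Y ⊂ X}

theorem stmt10 (sat : β → Set α → Prop) (f : Set α → Set β → Set α)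
    (hcompat : ∀ (B : Set α) (M : Set β), B.Finite →
      (FRsubs sat (ModelsOf sat B \ M)).Nonempty)
    (hfin : ∀ B M, (f B M).Finite)
    (hsucc : ∀ (B : Set α) (M : Set β), B.Finite →
      M ∩ ModelsOf sat (f B M) = ∅)
    (hincl : ∀ (B : Set α) (M : Set β), B.Finite →
      ModelsOf sat (f B M) ⊆ ModelsOf sat B)
    (hret : ∀ (B : Set α) (M : Set β), B.Finite → ∀ M' : Set β,
      ModelsOf sat (f B M) ⊂ M' → M' ⊆ ModelsOf sat B \ M → M' ∉ FRsets sat) :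
    ∀ (B : Set α) (M : Set β), B.Finite →
      ModelsOf sat (f B M) ∈ FRsubs sat (ModelsOf sat B \ M) := by
  intro B M hB
  refine ⟨⟨f B M, hfin B M, rfl⟩, ?_, ?_⟩
  · intro x hx
    refine ⟨hincl B M hB hx, fun hxM => ?_⟩
    have := hsucc B M hB
    exact absurd (Set.mem_inter hxM hx) (by simp [this])
  · rintro ⟨Y, hY, hsub, hYsub⟩
    exact hret B M hB Y hsub hYsub hY
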